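/- Let $n > 2$, let $p$ be a prime with $p \geq n-1$, and let $\delta \in S_n$ with $\delta \neq 1$. Then $p$ divides $|C_{S_n}(\delta)|$ if and only if $\delta$ is a single cycle of length $p$. -/

import Mathlib

open Equiv Equiv.Perm

/-- If `σ` is a cycle whose support misses at most one point, any permutation commuting
with `σ` is a power of `σ`. -/
lemma commute_mem_zpowers {n : ℕ} {σ δ : Equiv.Perm (Fin n)}
    (hσ : σ.IsCycle) (hcompl : n - σ.support.card ≤ 1) (hcomm : Commute δ σ) :
    δ ∈ Subgroup.zpowers σ := by
  obtain ⟨hinv, hz⟩ := hσ.commute_iff.mp hcomm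
  rw [Subgroup.mem_zpowers_iff] at hz
  obtain ⟨k, hk⟩ := hz
  have hcard : (σ.supportᶜ).card ≤ 1 := by
    rw [Finset.card_compl]
    simpa using hcompl
  have hδ : δ = ofSubtype (subtypePerm δ hinv) := by
    ext x
    by_cases hx : x ∈ σ.support
    · rw [ofSubtype_subtypePerm_of_mem hinv hx]
    · rw [ofSubtype_apply_of_not_mem _ hx]
      have hδx : δ x ∉ σ.support := fun h => hx ((hinv x).mp h)
      exact congrArg Fin.val (Finset.card_le_one.mp hcard (δ x)
        (Finset.mem_compl.mpr hδx) x (Finset.mem_compl.mpr hx))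
  rw [Subgroup.mem_zpowers_iff]
  exact ⟨k, by rw [hk, ← hδ]⟩

/-- A permutation of order `p` (prime, `n - 1 ≤ p`, `2 < n`) is a `p`-cycle. -/
lemma cycle_of_order {n p : ℕ} (hn : 2 < n) (hp : p.Prime) (hpn : n - 1 ≤ p)
    {σ : Equiv.Perm (Fin n)} (hσ : orderOf σ = p) :
    σ.IsCycle ∧ σ.support.card = p := by
  have h2 : Fintype.card (Fin n) < 2 * orderOf σ := by
    rw [Fintype.card_fin, hσ]
    have hp2 : 2 ≤ p := hp.two_le
    omega
  have hc : σ.IsCycle := isCycle_of_prime_order' (hσ ▸ hp) h2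
  refine ⟨hc, ?_⟩
  rw [← hc.orderOf, hσ]

theorem statement_8 (n p : ℕ) (hn : 2 < n) (hp : p.Prime) (hpn : n - 1 ≤ p)
    (δ : Equiv.Perm (Fin n)) (hδ : δ ≠ 1) :
    p ∣ Nat.card (Subgroup.centralizer {δ} : Subgroup (Equiv.Perm (Fin n))) ↔
      δ.cycleType = {p} := by
  constructor
  · intro hdvd
    haveI : Fact p.Prime := ⟨hp⟩
    obtain ⟨σ', hσ'⟩ := exists_prime_orderOf_dvd_card' p hdvd
    set σ : Equiv.Perm (Fin n) := (σ' : Equiv.Perm (Fin n)) with hσdef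
    have hord : orderOf σ = p := by
      rw [hσdef, orderOf_submonoid, hσ']
    obtain ⟨hc, hsupp⟩ := cycle_of_order hn hp hpn hord
    have hcomm : Commute δ σ := by
      have := σ'.2
      rw [Subgroup.mem_centralizer_singleton_iff] at this
      exact this.symm
    have hmem : δ ∈ Subgroup.zpowers σ :=
      commute_mem_zpowers hc (by omega) hcomm
    -- δ is a nontrivial power of σ, hence has order p
    have hdvd2 : orderOf δ ∣ p := by
      have := Subgroup.orderOf_dvd_natCard _ hmem
      rwa [Nat.card_zpowers, hord] at this
    have hord2 : orderOf δ = p :=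
      ((Nat.dvd_prime hp).mp hdvd2).resolve_left (by
        simpa [orderOf_eq_one_iff] using hδ)
    obtain ⟨hcδ, hsuppδ⟩ := cycle_of_order hn hp hpn hord2
    rw [hcδ.cycleType, hsuppδ]
  · intro hct
    have hord : orderOf δ = p := by
      rw [← lcm_cycleType, hct]
      simp
    have hmem : δ ∈ Subgroup.centralizer ({δ} : Set (Equiv.Perm (Fin n))) := by
      rw [Subgroup.mem_centralizer_singleton_iff]
    rw [← hord]
    exact Subgroup.orderOf_dvd_natCard _ hmem
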